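/- Let G be a finite group acting transitively and faithfully with fixity k on a finite set Ω (i.e., k is the maximum number of fixed points of nontrivial elements of G). If X is a nontrivial subgroup of the point stabilizer G_α for some α ∈ Ω, then the index of N_{G_α}(X) in N_G(X) is at most k. -/

import Mathlib

open MulAction Pointwise

def HasFixity (G Ω : Type*) [Group G] [MulAction G Ω] (k : ℕ) : Prop :=
  (∀ g : G, g ≠ 1 → (fixedBy Ω g).ncard ≤ k) ∧ ∃ g : G, g ≠ 1 ∧ (fixedBy Ω g).ncard = k

def IsSemiregular (G Ω : Type*) [Group G] [MulAction G Ω] (N : Subgroup G) : Prop :=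
  ∀ n ∈ N, n ≠ 1 → ∀ ω : Ω, n • ω ≠ ω

def IsMinimalNormal (G : Type*) [Group G] (N : Subgroup G) : Prop :=
  N.Normal ∧ N ≠ ⊥ ∧ ∀ M : Subgroup G, M.Normal → M ≤ N → M = ⊥ ∨ M = N

def IsOrbitOf (G Ω : Type*) [Group G] [MulAction G Ω] (N : Subgroup G) (s : Set Ω) : Prop :=
  ∃ ω : Ω, s = MulAction.orbit N ω

def IsRegularOn (G Ω : Type*) [Group G] [MulAction G Ω] (R : Subgroup G) : Prop :=
  (∀ ω ω' : Ω, ∃ r ∈ R, r • ω = ω') ∧ ∀ r ∈ R, r ≠ 1 → ∀ ω : Ω, r • ω ≠ ω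

def IsFrobeniusOn (G Ω : Type*) [Group G] [MulAction G Ω] (F : Subgroup G) (s : Set Ω) : Prop :=
  (∃ f ∈ F, f ≠ 1 ∧ ∃ ω ∈ s, f • ω = ω) ∧
  ∀ f ∈ F, f ≠ 1 → ∀ ω ∈ s, ∀ ω' ∈ s, f • ω = ω → f • ω' = ω' → ω = ω'

theorem stmt_0 (G Ω : Type*) [Group G] [Finite G] [MulAction G Ω] [Finite Ω]
    [FaithfulSMul G Ω] [IsPretransitive G Ω] (k : ℕ) (hfix : HasFixity G Ω k)
    (α : Ω) (X : Subgroup G) (hX : X ≠ ⊥) (hXle : X ≤ stabilizer G α) :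
    (stabilizer G α).relIndex (Subgroup.normalizer (X : Set G)) ≤ k := by
  obtain ⟨x, hx1⟩ := Subgroup.ne_bot_iff_exists_ne_one.mp hX
  have hx1' : (x : G) ≠ 1 := fun h => hx1 (Subtype.ext h)
  have key : (stabilizer G α).subgroupOf (Subgroup.normalizer (X : Set G)) = stabilizer (Subgroup.normalizer (X : Set G)) α := by
    ext n
    simp [Subgroup.mem_subgroupOf, MulAction.mem_stabilizer_iff, Subgroup.smul_def]
  rw [Subgroup.relIndex, key, index_stabilizer]
  refine le_trans (Set.ncard_le_ncard ?_ (Set.toFinite _)) (hfix.1 x hx1')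
  rintro _ ⟨n, rfl⟩
  have hmem : (n : G)⁻¹ * x * n ∈ X := by
    have := (Subgroup.mem_normalizer_iff.mp n.2 ((n : G)⁻¹ * x * n)).mpr ?_
    · simpa [mul_assoc] using this
    · simp [mul_assoc, x.2]
  have hst : ((n : G)⁻¹ * x * n) • α = α := hXle hmem
  show (x : G) • ((n : G) • α) = (n : G) • α
  calc (x : G) • ((n : G) • α) = (n : G) • (((n : G)⁻¹ * x * n) • α) := by
        simp [mul_smul]
    _ = (n : G) • α := by rw [hst]
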